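/- For every integer n ≥ 2, the infimum defining α_n is attained by a unique vector δ = (δ_1, …, δ_n) of positive reals with δ_1 = 1; moreover this vector satisfies δ_i = α_n · S_{i+1} for all 1 ≤ i ≤ n−1 and δ_n = α_n · S_n (so in particular δ_{n−1} = δ_n), where S_i = δ_1 + ⋯ + δ_i. -/

import Mathlib

open Finset

/-- `S δ i = δ 1 + ⋯ + δ i`. -/
noncomputable def S (δ : ℕ → ℝ) (i : ℕ) : ℝ := ∑ k ∈ Finset.Icc 1 i, δ k

/-- `max {δ 1 / S 2, …, δ (n-1) / S n, δ n / S n}`.  For `i ≤ n - 1` we have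
`min (i+1) n = i+1`, while for `i = n` we get `δ n / S n`. -/
noncomputable def maxRatio (n : ℕ) (δ : ℕ → ℝ) : ℝ :=
  (insert n (Finset.Icc 1 n)).sup' (Finset.insert_nonempty _ _)
    (fun i => δ i / S δ (min (i + 1) n))

/-- `α n` is the infimum over positive vectors `δ` of the above maximum. -/
noncomputable def alpha (n : ℕ) : ℝ :=
  sInf {r : ℝ | ∃ δ : ℕ → ℝ, (∀ i ∈ Finset.Icc 1 n, 0 < δ i) ∧ r = maxRatio n δ}

noncomputable def th (n : ℕ) : ℝ := Real.pi / (n + 2 : ℝ)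

noncomputable def sfun (n k : ℕ) : ℝ := (2 * Real.cos (th n)) ^ k * Real.sin (k * th n)

noncomputable def astar (n : ℕ) : ℝ := 1 / (4 * Real.cos (th n) ^ 2)

noncomputable def dstar (n k : ℕ) : ℝ := (sfun n k - sfun n (k - 1)) / sfun n 1

lemma th_pos (n : ℕ) : 0 < th n := by
  have : (0:ℝ) < (n:ℝ) + 2 := by positivity
  exact div_pos Real.pi_pos this

lemma th_lt (n : ℕ) (hn : 2 ≤ n) : th n < Real.pi / 2 := by
  unfold th
  rw [div_lt_div_iff₀ (by positivity) (by norm_num)]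
  have : (2:ℝ) ≤ (n:ℝ) := by exact_mod_cast hn
  nlinarith [Real.pi_pos]

lemma cos_pos (n : ℕ) (hn : 2 ≤ n) : 0 < Real.cos (th n) :=
  Real.cos_pos_of_mem_Ioo ⟨by linarith [th_pos n, Real.pi_pos], th_lt n hn⟩

lemma astar_pos (n : ℕ) (hn : 2 ≤ n) : 0 < astar n := by
  have := cos_pos n hn; unfold astar; positivity

lemma sin_pos (n k : ℕ) (h1 : 1 ≤ k) (h2 : k ≤ n + 1) : 0 < Real.sin (k * th n) := by
  apply Real.sin_pos_of_pos_of_lt_pi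
  · have h := th_pos n
    have : (1:ℝ) ≤ (k:ℝ) := by exact_mod_cast h1
    nlinarith
  · have hk : (k:ℝ) < (n:ℝ) + 2 := by
      have : (k:ℝ) ≤ (n:ℝ) + 1 := by exact_mod_cast h2
      linarith
    have h := th_pos n
    have hpi : (k:ℝ) * th n < ((n:ℝ) + 2) * th n := by nlinarith
    have : ((n:ℝ) + 2) * th n = Real.pi := by
      unfold th; field_simp
    linarith

lemma sfun_pos (n k : ℕ) (hn : 2 ≤ n) (h1 : 1 ≤ k) (h2 : k ≤ n + 1) : 0 < sfun n k := by
  have := cos_pos n hn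
  have := sin_pos n k h1 h2
  unfold sfun; positivity

lemma sfun_nonneg (n k : ℕ) (hn : 2 ≤ n) (h2 : k ≤ n + 1) : 0 ≤ sfun n k := by
  rcases Nat.eq_zero_or_pos k with h | h
  · subst h; simp [sfun]
  · exact (sfun_pos n k hn h h2).le

lemma sfun_zero (n : ℕ) : sfun n 0 = 0 := by simp [sfun]

lemma sfun_rec (n m : ℕ) (hn : 2 ≤ n) :
    sfun n (m + 1) - sfun n m = sfun n (m + 2) * astar n := by
  have hc := cos_pos n hn
  unfold sfun astar
  have h1 : ((m:ℝ) + 2) * th n = ((m:ℝ) + 1) * th n + th n := by ring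
  have h2 : (m:ℝ) * th n = ((m:ℝ) + 1) * th n - th n := by ring
  push_cast
  rw [h1, h2, Real.sin_add, Real.sin_sub]
  field_simp
  ring

lemma sfun_top (n : ℕ) (hn : 2 ≤ n) : sfun n (n + 1) = sfun n n := by
  have key : ((n:ℝ) + 1) * th n = Real.pi - th n := by
    unfold th; field_simp; ring
  have key2 : (n:ℝ) * th n = Real.pi - 2 * th n := by
    unfold th; field_simp; ring
  unfold sfun
  push_cast
  rw [key, key2, Real.sin_pi_sub, Real.sin_pi_sub, Real.sin_two_mul]
  ring

lemma S_zero (δ : ℕ → ℝ) : S δ 0 = 0 := by simp [S]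

lemma S_one (δ : ℕ → ℝ) : S δ 1 = δ 1 := by simp [S]

lemma S_succ (δ : ℕ → ℝ) (m : ℕ) : S δ (m + 1) = S δ m + δ (m + 1) := by
  unfold S
  rw [Finset.sum_Icc_succ_top (by omega)]

lemma S_pos (δ : ℕ → ℝ) (n : ℕ) (hpos : ∀ i ∈ Finset.Icc 1 n, 0 < δ i)
    (i : ℕ) (h1 : 1 ≤ i) (h2 : i ≤ n) : 0 < S δ i := by
  unfold S
  apply Finset.sum_pos
  · intro k hk
    exact hpos k (by simp at hk ⊢; omega)
  · exact ⟨1, by simp; omega⟩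

lemma S_dstar (n i : ℕ) : S (dstar n) i = sfun n i / sfun n 1 := by
  unfold S dstar
  rw [← Finset.sum_div]
  congr 1
  have : Finset.Icc 1 i = Finset.map ⟨fun j => j + 1, add_left_injective 1⟩ (Finset.range i) := by
    ext x
    simp only [Finset.mem_Icc, Finset.mem_map, Finset.mem_range, Function.Embedding.coeFn_mk]
    constructor
    · rintro ⟨h1, h2⟩; exact ⟨x-1, by omega, by omega⟩
    · rintro ⟨j, hj, rfl⟩; omega
  rw [this, Finset.sum_map]
  simp only [Function.Embedding.coeFn_mk, Nat.add_sub_cancel]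
  rw [Finset.sum_range_sub (f := sfun n)]
  rw [sfun_zero]; ring

lemma dstar_eq (n i : ℕ) (hn : 2 ≤ n) (h1 : 1 ≤ i) :
    dstar n i = astar n * S (dstar n) (i + 1) := by
  obtain ⟨m, rfl⟩ : ∃ m, i = m + 1 := ⟨i - 1, by omega⟩
  rw [S_dstar]
  unfold dstar
  simp only [Nat.add_sub_cancel]
  rw [sfun_rec n m hn]
  ring

lemma dstar_pos (n i : ℕ) (hn : 2 ≤ n) (h1 : 1 ≤ i) (h2 : i ≤ n) : 0 < dstar n i := by
  obtain ⟨m, rfl⟩ : ∃ m, i = m + 1 := ⟨i - 1, by omega⟩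
  unfold dstar
  simp only [Nat.add_sub_cancel]
  rw [sfun_rec n m hn]
  have h3 := sfun_pos n (m + 2) hn (by omega) (by omega)
  have h4 := sfun_pos n 1 hn (by omega) (by omega)
  have h5 := astar_pos n hn
  positivity

lemma dstar_one (n : ℕ) (hn : 2 ≤ n) : dstar n 1 = 1 := by
  unfold dstar
  simp only [Nat.sub_self]
  rw [sfun_zero, sub_zero]
  have h4 := sfun_pos n 1 hn (by omega) (by omega)
  field_simp

lemma dstar_top (n : ℕ) (hn : 2 ≤ n) : dstar n n = astar n * S (dstar n) n := by
  obtain ⟨m, hm⟩ : ∃ m, n = m + 1 := ⟨n - 1, by omega⟩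
  have h := dstar_eq n n hn (by omega)
  rw [h, S_dstar, S_dstar, sfun_top n hn]

lemma constraint (n : ℕ) (δ : ℕ → ℝ) (hpos : ∀ i ∈ Finset.Icc 1 n, 0 < δ i)
    (i : ℕ) (h1 : 1 ≤ i) (h2 : i < n) : δ i ≤ maxRatio n δ * S δ (i + 1) := by
  have hmem : i ∈ insert n (Finset.Icc 1 n) :=
    Finset.mem_insert_of_mem (Finset.mem_Icc.mpr ⟨h1, h2.le⟩)
  have hle := Finset.le_sup' (fun i => δ i / S δ (min (i + 1) n))
    hmem
  have hmin : min (i + 1) n = i + 1 := min_eq_left (by omega)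
  rw [hmin] at hle
  have hS : 0 < S δ (i + 1) := S_pos δ n hpos (i + 1) (by omega) (by omega)
  rw [div_le_iff₀ hS] at hle
  calc δ i ≤ maxRatio n δ * S δ (i + 1) := hle

lemma constraint_top (n : ℕ) (hn : 2 ≤ n) (δ : ℕ → ℝ) (hpos : ∀ i ∈ Finset.Icc 1 n, 0 < δ i) :
    δ n ≤ maxRatio n δ * S δ n := by
  have hle := Finset.le_sup' (fun i => δ i / S δ (min (i + 1) n))
    (Finset.mem_insert_self n (Finset.Icc 1 n))
  have hmin : min (n + 1) n = n := min_eq_right (by omega)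
  rw [hmin] at hle
  have hS : 0 < S δ n := S_pos δ n hpos n (by omega) le_rfl
  rw [div_le_iff₀ hS] at hle
  exact hle

lemma maxRatio_dstar (n : ℕ) (hn : 2 ≤ n) : maxRatio n (dstar n) = astar n := by
  have hS : ∀ j : ℕ, 1 ≤ j → j ≤ n → 0 < S (dstar n) j := fun j hj1 hj2 =>
    S_pos (dstar n) n (fun i hi => dstar_pos n i hn (Finset.mem_Icc.mp hi).1 (Finset.mem_Icc.mp hi).2)
      j hj1 hj2
  have hval : ∀ i ∈ insert n (Finset.Icc 1 n),
      dstar n i / S (dstar n) (min (i + 1) n) = astar n := by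
    intro i hi
    rcases Finset.mem_insert.mp hi with rfl | hi
    · have hmin : min (i + 1) i = i := min_eq_right (by omega)
      rw [hmin, dstar_top _ hn]
      field_simp [ne_of_gt (hS _ (by omega) le_rfl)]
    · obtain ⟨hi1, hi2⟩ := Finset.mem_Icc.mp hi
      rcases eq_or_lt_of_le hi2 with rfl | hlt
      · have hmin : min (i + 1) i = i := min_eq_right (by omega)
        rw [hmin, dstar_top _ hn]
        field_simp [ne_of_gt (hS i (by omega) le_rfl)]
      · have hmin : min (i + 1) n = i + 1 := min_eq_left (by omega)
        rw [hmin, dstar_eq n i hn hi1]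
        field_simp [ne_of_gt (hS (i+1) (by omega) (by omega))]
  apply le_antisymm
  · apply Finset.sup'_le
    intro i hi
    rw [hval i hi]
  · have := Finset.le_sup' (fun i => dstar n i / S (dstar n) (min (i + 1) n))
      (Finset.mem_insert_self n (Finset.Icc 1 n))
    rw [hval n (Finset.mem_insert_self n _)] at this
    exact this

/-- The key forward induction: comparison of ratios. -/
lemma key_ineq (n : ℕ) (hn : 2 ≤ n) (δ : ℕ → ℝ) (hpos : ∀ i ∈ Finset.Icc 1 n, 0 < δ i)
    (hcon : ∀ i, 1 ≤ i → i < n → δ i ≤ astar n * S δ (i + 1)) :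
    ∀ m, m + 1 ≤ n → S δ m * sfun n (m + 1) ≤ sfun n m * S δ (m + 1) := by
  intro m
  induction m with
  | zero => intro _; rw [S_zero, sfun_zero]; ring_nf; exact le_rfl
  | succ p ih =>
    intro h
    have IH := ih (by omega)
    have ha := astar_pos n hn
    have hrec := sfun_rec n p hn
    have hrec2 : (sfun n (p + 1) - sfun n p) * S δ (p + 1)
        = astar n * (sfun n (p + 2) * S δ (p + 1)) := by rw [hrec]; ring
    have hspos : (0:ℝ) < sfun n (p + 1) := sfun_pos n (p + 1) hn (by omega) (by omega)
    have hcon' : δ (p + 1) ≤ astar n * S δ (p + 2) := hcon (p + 1) (by omega) (by omega)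
    have hd : δ (p + 1) = S δ (p + 1) - S δ p := by
      have := S_succ δ p; linarith
    rw [hd] at hcon'
    have e1 : sfun n (p + 1) * (S δ (p + 1) - S δ p)
        ≤ sfun n (p + 1) * (astar n * S δ (p + 2)) :=
      mul_le_mul_of_nonneg_left hcon' hspos.le
    have h1 : astar n * (S δ (p + 1) * sfun n (p + 2)) ≤ astar n * (sfun n (p + 1) * S δ (p + 2)) := by
      nlinarith [e1, IH, hrec2]
    exact le_of_mul_le_mul_left h1 ha

lemma lower_bound (n : ℕ) (hn : 2 ≤ n) (δ : ℕ → ℝ) (hpos : ∀ i ∈ Finset.Icc 1 n, 0 < δ i) :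
    astar n ≤ maxRatio n δ := by
  by_contra hcon
  push_neg at hcon
  set r := maxRatio n δ with hr
  have hra : r ≤ astar n := hcon.le
  have hcons : ∀ i, 1 ≤ i → i < n → δ i ≤ astar n * S δ (i + 1) := by
    intro i h1 h2
    have := constraint n δ hpos i h1 h2
    have hS : 0 < S δ (i + 1) := S_pos δ n hpos (i + 1) (by omega) (by omega)
    nlinarith
  obtain ⟨m, hm⟩ : ∃ m, n = m + 1 := ⟨n - 1, by omega⟩
  have hkey := key_ineq n hn δ hpos hcons m (by omega)
  rw [← hm] at hkey
  have htop := constraint_top n hn δ hpos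
  have hrec := sfun_rec n m hn
  have htop2 : sfun n (m + 2) = sfun n (m + 1) := by
    have := sfun_top n hn
    rw [hm] at this ⊢
    convert this using 2
  rw [htop2, ← hm] at hrec
  have hSn : 0 < S δ n := S_pos δ n hpos n (by omega) le_rfl
  have hsn : 0 < sfun n n := sfun_pos n n hn (by omega) (by omega)
  have hd : δ n = S δ n - S δ m := by
    have := S_succ δ m; rw [← hm] at this; linarith
  rw [hd] at htop
  -- astar * sfun n n * S δ n ≤ sfun n n * (S δ n - S δ m) ≤ r * sfun n n * S δ n < astar * ...
  have hmn : sfun n m = sfun n (n - 1) := by rw [hm]; norm_num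
  have hSm : S δ m = S δ (n - 1) := by rw [hm]; norm_num
  nlinarith [hkey, htop, hrec, mul_pos hsn hSn, mul_lt_mul_of_pos_right hcon (mul_pos hsn hSn)]

lemma alpha_eq (n : ℕ) (hn : 2 ≤ n) : alpha n = astar n := by
  have hmem : astar n ∈ {r : ℝ | ∃ δ : ℕ → ℝ, (∀ i ∈ Finset.Icc 1 n, 0 < δ i) ∧ r = maxRatio n δ} :=
    ⟨dstar n, fun i hi => dstar_pos n i hn (Finset.mem_Icc.mp hi).1 (Finset.mem_Icc.mp hi).2,
      (maxRatio_dstar n hn).symm⟩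
  have hlb : ∀ r ∈ {r : ℝ | ∃ δ : ℕ → ℝ, (∀ i ∈ Finset.Icc 1 n, 0 < δ i) ∧ r = maxRatio n δ},
      astar n ≤ r := by
    rintro r ⟨δ, hp, rfl⟩
    exact lower_bound n hn δ hp
  exact le_antisymm (csInf_le ⟨astar n, hlb⟩ hmem) (le_csInf ⟨_, hmem⟩ hlb)

lemma unique_opt (n : ℕ) (hn : 2 ≤ n) (δ : ℕ → ℝ)
    (hpos : ∀ i ∈ Finset.Icc 1 n, 0 < δ i) (h1 : δ 1 = 1)
    (hmax : maxRatio n δ = astar n) :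
    ∀ i, 1 ≤ i → i ≤ n → δ i = dstar n i := by
  have ha := astar_pos n hn
  have hcons : ∀ i, 1 ≤ i → i < n → δ i ≤ astar n * S δ (i + 1) := by
    intro i hi1 hi2
    have := constraint n δ hpos i hi1 hi2
    rw [hmax] at this; exact this
  have htop : δ n ≤ astar n * S δ n := by
    have := constraint_top n hn δ hpos
    rw [hmax] at this; exact this
  have hkey := key_ineq n hn δ hpos hcons
  -- Q n
  obtain ⟨m, hm⟩ : ∃ m, n = m + 1 := ⟨n - 1, by omega⟩
  have hQn : S δ m * sfun n n = sfun n m * S δ n := by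
    have hk := hkey m (by omega)
    rw [← hm] at hk
    have hrec := sfun_rec n m hn
    have htop2 : sfun n (m + 2) = sfun n (m + 1) := by
      have := sfun_top n hn
      rw [hm] at this ⊢
      convert this using 2
    rw [htop2, ← hm] at hrec
    have hrec2 : (sfun n n - sfun n m) * S δ n = astar n * (sfun n n * S δ n) := by
      rw [hrec]; ring
    have hsn : 0 < sfun n n := sfun_pos n n hn (by omega) (by omega)
    have hd : δ n = S δ n - S δ m := by
      have := S_succ δ m; rw [← hm] at this; linarith
    rw [hd] at htop
    have e1 : sfun n n * (S δ n - S δ m) ≤ sfun n n * (astar n * S δ n) :=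
      mul_le_mul_of_nonneg_left htop hsn.le
    nlinarith [hk, e1, hrec2]
  -- downward induction: Q j for 2 ≤ j ≤ n
  have Hdown : ∀ d j, j + d = n → 2 ≤ j → S δ (j - 1) * sfun n j = sfun n (j - 1) * S δ j := by
    intro d
    induction d with
    | zero =>
      intro j hj h2
      have : j = n := by omega
      subst this
      have : j - 1 = m := by omega
      rw [this]
      exact hQn
    | succ e ih =>
      intro j hj h2
      have hQ := ih (j + 1) (by omega) (by omega)
      obtain ⟨p, rfl⟩ : ∃ p, j = p + 1 := ⟨j - 1, by omega⟩
      simp only [Nat.add_sub_cancel] at hQ ⊢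
      -- hQ : S δ (p+1) * sfun n (p+2) = sfun n (p+1) * S δ (p+2)
      have hk := hkey p (by omega)
      have hrec := sfun_rec n p hn
      have hrec2 : (sfun n (p + 1) - sfun n p) * S δ (p + 1)
          = astar n * (S δ (p + 1) * sfun n (p + 2)) := by rw [hrec]; ring
      have hQ2 : astar n * (S δ (p + 1) * sfun n (p + 2))
          = astar n * (sfun n (p + 1) * S δ (p + 2)) := by rw [hQ]
      have hspos : (0:ℝ) < sfun n (p + 1) := sfun_pos n (p + 1) hn (by omega) (by omega)
      have hcon' : δ (p + 1) ≤ astar n * S δ (p + 2) := hcons (p + 1) (by omega) (by omega)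
      have hd : δ (p + 1) = S δ (p + 1) - S δ p := by
        have := S_succ δ p; linarith
      rw [hd] at hcon'
      have e1 : sfun n (p + 1) * (S δ (p + 1) - S δ p)
          ≤ sfun n (p + 1) * (astar n * S δ (p + 2)) :=
        mul_le_mul_of_nonneg_left hcon' hspos.le
      nlinarith [hk, e1, hrec2, hQ2]
  -- forward: S δ j = sfun n j / sfun n 1
  have hs1 : (0:ℝ) < sfun n 1 := sfun_pos n 1 hn (by omega) (by omega)
  have hSform : ∀ j, j ≤ n → S δ j = sfun n j / sfun n 1 := by
    intro j
    induction j with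
    | zero => intro _; rw [S_zero, sfun_zero]; simp
    | succ p ihp =>
      intro h
      rcases Nat.eq_zero_or_pos p with hp0 | hp1
      · subst hp0
        rw [S_one, h1]
        field_simp
      · have hQ := Hdown (n - (p + 1)) (p + 1) (by omega) (by omega)
        simp only [Nat.add_sub_cancel] at hQ
        rw [ihp (by omega)] at hQ
        have hsp : (0:ℝ) < sfun n p := sfun_pos n p hn hp1 (by omega)
        have := mul_left_cancel₀ (ne_of_gt hsp)
          (show sfun n p * (sfun n (p + 1) / sfun n 1) = sfun n p * S δ (p + 1) by
            rw [← hQ]; ring)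
        exact this.symm
  intro i hi1 hi2
  obtain ⟨q, rfl⟩ : ∃ q, i = q + 1 := ⟨i - 1, by omega⟩
  have hsub := S_succ δ q
  rw [hSform q (by omega), hSform (q + 1) (by omega)] at hsub
  unfold dstar
  simp only [Nat.add_sub_cancel]
  field_simp at hsub ⊢
  linarith

theorem alpha_attained_unique (n : ℕ) (hn : 2 ≤ n) :
    ∃ δ : ℕ → ℝ,
      ((∀ i ∈ Finset.Icc 1 n, 0 < δ i) ∧ δ 1 = 1 ∧ maxRatio n δ = alpha n) ∧
      (∀ δ' : ℕ → ℝ,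
        ((∀ i ∈ Finset.Icc 1 n, 0 < δ' i) ∧ δ' 1 = 1 ∧ maxRatio n δ' = alpha n) →
        ∀ i ∈ Finset.Icc 1 n, δ' i = δ i) ∧
      (∀ i ∈ Finset.Icc 1 (n - 1), δ i = alpha n * S δ (i + 1)) ∧
      δ n = alpha n * S δ n := by
  refine ⟨dstar n, ⟨fun i hi => dstar_pos n i hn (Finset.mem_Icc.mp hi).1 (Finset.mem_Icc.mp hi).2,
    dstar_one n hn, by rw [maxRatio_dstar n hn, alpha_eq n hn]⟩, ?_, ?_, ?_⟩
  · rintro δ' ⟨hp, h1, hm⟩ i hi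
    rw [alpha_eq n hn] at hm
    exact unique_opt n hn δ' hp h1 hm i (Finset.mem_Icc.mp hi).1 (Finset.mem_Icc.mp hi).2
  · intro i hi
    rw [alpha_eq n hn]
    exact dstar_eq n i hn (Finset.mem_Icc.mp hi).1
  · rw [alpha_eq n hn]
    exact dstar_top n hn
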